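/- The uniform ℓ1-contextuality distance is subadditive under independent juxtapositions: for behaviors B1 in a scenario S1 and B2 in a scenario S2, with NC(S1), NC(S2) and NC(S1 ⊗ S2) nonempty, one has D_u(B1 ⊗ B2) ≤ D_u(B1) + D_u(B2), where D_u(B1 ⊗ B2) is computed in the juxtaposed scenario S1 ⊗ S2. -/

import Mathlib

open scoped BigOperators

/-- A probability distribution on a finite type. -/
def IsDist {X : Type} [Fintype X] (f : X → ℝ) : Prop :=
  (∀ x, 0 ≤ f x) ∧ ∑ x, f x = 1

lemma isDist_prodFun {A B : Type} [Fintype A] [Fintype B] {f : A → ℝ} {g : B → ℝ}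
    (hf : IsDist f) (hg : IsDist g) :
    IsDist (fun x : A × B => f x.1 * g x.2) := by
  refine ⟨fun x => mul_nonneg (hf.1 x.1) (hg.1 x.2), ?_⟩
  calc ∑ x : A × B, f x.1 * g x.2 = ∑ a, ∑ b, f a * g b := by
        rw [Fintype.sum_prod_type]
    _ = (∑ a, f a) * (∑ b, g b) := by rw [Finset.sum_mul_sum]
    _ = 1 := by rw [hf.2, hg.2, mul_one]

lemma isDist_prodFun' {K1 J1 K2 J2 : Type} [Fintype K1] [Fintype J1] [Fintype K2] [Fintype J2]
    {f : K1 × J1 → ℝ} {g : K2 × J2 → ℝ} (hf : IsDist f) (hg : IsDist g) :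
    IsDist (fun kj : (K1 × K2) × (J1 × J2) => f (kj.1.1, kj.2.1) * g (kj.1.2, kj.2.2)) := by
  refine ⟨fun kj => mul_nonneg (hf.1 _) (hg.1 _), ?_⟩
  have h := (isDist_prodFun hf hg).2
  rw [← h]
  exact Fintype.sum_equiv (Equiv.prodProdProdComm K1 K2 J1 J2) _ _ (by rintro ⟨⟨a, b⟩, c, d⟩; rfl)

/-- A prepare-and-measure scenario: finite nonempty sets of preparations `I`,
measurements `J` and outcomes `K` (carried as type-class assumptions on the index
types), together with a family of preparation operational equivalences (pairs of
probability distributions on `I`) and a family of measurement operational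
equivalences (pairs of probability distributions on `K × J`). -/
structure Scenario (I J K : Type) [Fintype I] [Fintype J] [Fintype K] where
  PE : Type
  ME : Type
  prepEq : PE → (I → ℝ) × (I → ℝ)
  measEq : ME → (K × J → ℝ) × (K × J → ℝ)
  prep_dist : ∀ s, IsDist (prepEq s).1 ∧ IsDist (prepEq s).2
  meas_dist : ∀ r, IsDist (measEq r).1 ∧ IsDist (measEq r).2

/-- A behavior: a family `p k ∣ j, i` of nonnegative reals, normalized over outcomes. -/
def IsBehavior {I J K : Type} [Fintype I] [Fintype J] [Fintype K]
    (p : I → J → K → ℝ) : Prop :=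
  (∀ i j k, 0 ≤ p i j k) ∧ ∀ i j, ∑ k, p i j k = 1

/-- A behavior is noncontextual in a scenario `S` if it admits a universally
noncontextual ontological model over a finite ontic space. -/
def Noncontextual {I J K : Type} [Fintype I] [Fintype J] [Fintype K]
    (S : Scenario I J K) (p : I → J → K → ℝ) : Prop :=
  ∃ (n : ℕ) (μ : I → Fin n → ℝ) (ξ : Fin n → J → K → ℝ),
    (∀ i, IsDist (μ i)) ∧
    (∀ l j, IsDist (ξ l j)) ∧
    (∀ i j k, p i j k = ∑ l, ξ l j k * μ i l) ∧
    (∀ s l, ∑ i, ((S.prepEq s).1 i - (S.prepEq s).2 i) * μ i l = 0) ∧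
    (∀ r l, ∑ kj : K × J, ((S.measEq r).1 kj - (S.measEq r).2 kj) * ξ l kj.2 kj.1 = 0)

/-- The juxtaposition of two behaviors. -/
def prodBehavior {I1 J1 K1 I2 J2 K2 : Type}
    [Fintype I1] [Fintype J1] [Fintype K1] [Fintype I2] [Fintype J2] [Fintype K2]
    (p1 : I1 → J1 → K1 → ℝ) (p2 : I2 → J2 → K2 → ℝ) :
    I1 × I2 → J1 × J2 → K1 × K2 → ℝ :=
  fun i j k => p1 i.1 j.1 k.1 * p2 i.2 j.2 k.2

/-- The juxtaposition `S1 ⊗ S2` of two scenarios: preparation (resp. measurement)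
equivalences are all pairs `(α ⊗ γ, β ⊗ γ)` with `(α, β)` an equivalence of `S1` and
`γ` an arbitrary distribution on the preparations (resp. measurement events) of `S2`,
together with the symmetric ones coming from `S2`. -/
def Scenario.prod {I1 J1 K1 I2 J2 K2 : Type}
    [Fintype I1] [Fintype J1] [Fintype K1] [Fintype I2] [Fintype J2] [Fintype K2]
    (S1 : Scenario I1 J1 K1) (S2 : Scenario I2 J2 K2) :
    Scenario (I1 × I2) (J1 × J2) (K1 × K2) where
  PE := (S1.PE × {γ : I2 → ℝ // IsDist γ}) ⊕ (S2.PE × {γ : I1 → ℝ // IsDist γ})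
  ME := (S1.ME × {γ : K2 × J2 → ℝ // IsDist γ}) ⊕ (S2.ME × {γ : K1 × J1 → ℝ // IsDist γ})
  prepEq := fun e =>
    match e with
    | Sum.inl (s, γ) =>
        (fun i => (S1.prepEq s).1 i.1 * γ.1 i.2, fun i => (S1.prepEq s).2 i.1 * γ.1 i.2)
    | Sum.inr (s, γ) =>
        (fun i => γ.1 i.1 * (S2.prepEq s).1 i.2, fun i => γ.1 i.1 * (S2.prepEq s).2 i.2)
  measEq := fun e =>
    match e with
    | Sum.inl (r, γ) =>
        (fun kj => (S1.measEq r).1 (kj.1.1, kj.2.1) * γ.1 (kj.1.2, kj.2.2),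
         fun kj => (S1.measEq r).2 (kj.1.1, kj.2.1) * γ.1 (kj.1.2, kj.2.2))
    | Sum.inr (r, γ) =>
        (fun kj => γ.1 (kj.1.1, kj.2.1) * (S2.measEq r).1 (kj.1.2, kj.2.2),
         fun kj => γ.1 (kj.1.1, kj.2.1) * (S2.measEq r).2 (kj.1.2, kj.2.2))
  prep_dist := by
    rintro (⟨s, γ⟩ | ⟨s, γ⟩)
    · exact ⟨isDist_prodFun (S1.prep_dist s).1 γ.2, isDist_prodFun (S1.prep_dist s).2 γ.2⟩
    · exact ⟨isDist_prodFun γ.2 (S2.prep_dist s).1, isDist_prodFun γ.2 (S2.prep_dist s).2⟩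
  meas_dist := by
    rintro (⟨r, γ⟩ | ⟨r, γ⟩)
    · exact ⟨isDist_prodFun' (S1.meas_dist r).1 γ.2, isDist_prodFun' (S1.meas_dist r).2 γ.2⟩
    · exact ⟨isDist_prodFun' γ.2 (S2.meas_dist r).1, isDist_prodFun' γ.2 (S2.meas_dist r).2⟩

/-- A free operation: a pre-processing of preparations, a pre-processing of
measurement choices and, for each simulated measurement, a post-processing of the
outcomes, all given by stochastic maps. -/
structure FreeOp (I J K I' J' K' : Type)
    [Fintype I] [Fintype J] [Fintype K] [Fintype I'] [Fintype J'] [Fintype K'] where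
  qP : I' → I → ℝ
  qM : J' → J → ℝ
  qO : J' → K → K' → ℝ
  qP_dist : ∀ i', IsDist (qP i')
  qM_dist : ∀ j', IsDist (qM j')
  qO_dist : ∀ j' k, IsDist (qO j' k)

/-- Action of a free operation on a behavior. -/
def FreeOp.apply {I J K I' J' K' : Type}
    [Fintype I] [Fintype J] [Fintype K] [Fintype I'] [Fintype J'] [Fintype K']
    (T : FreeOp I J K I' J' K') (p : I → J → K → ℝ) : I' → J' → K' → ℝ :=
  fun i' j' k' => ∑ i, ∑ j, ∑ k, T.qO j' k k' * p i j k * T.qM j' j * T.qP i' i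

/-- `T` lifts the operational equivalences of `S'` to those of `S`. -/
def LiftsEquivalences {I J K I' J' K' : Type}
    [Fintype I] [Fintype J] [Fintype K] [Fintype I'] [Fintype J'] [Fintype K']
    (S : Scenario I J K) (S' : Scenario I' J' K') (T : FreeOp I J K I' J' K') : Prop :=
  (∀ s' : S'.PE, ∃ s : S.PE, ∀ i : I,
      ∑ i' : I', ((S'.prepEq s').1 i' - (S'.prepEq s').2 i') * T.qP i' i
        = (S.prepEq s).1 i - (S.prepEq s).2 i) ∧
  (∀ r' : S'.ME, ∃ r : S.ME, ∀ k : K, ∀ j : J,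
      ∑ kj' : K' × J', ((S'.measEq r').1 kj' - (S'.measEq r').2 kj') *
          (T.qO kj'.2 k kj'.1 * T.qM kj'.2 j)
        = (S.measEq r).1 (k, j) - (S.measEq r).2 (k, j))

/-- The contextual fraction. -/
noncomputable def ctxFraction {I J K : Type} [Fintype I] [Fintype J] [Fintype K]
    (S : Scenario I J K) (p : I → J → K → ℝ) : ℝ :=
  1 - sSup {l : ℝ | 0 ≤ l ∧ l ≤ 1 ∧ ∃ q q' : I → J → K → ℝ,
      Noncontextual S q ∧ IsBehavior q' ∧
      ∀ i j k, p i j k = l * q i j k + (1 - l) * q' i j k}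

/-- The robustness of contextuality. -/
noncomputable def robustness {I J K : Type} [Fintype I] [Fintype J] [Fintype K]
    (S : Scenario I J K) (p : I → J → K → ℝ) : ℝ :=
  sInf {l : ℝ | 0 ≤ l ∧ l ≤ 1 ∧ ∃ q : I → J → K → ℝ, Noncontextual S q ∧
      Noncontextual S (fun i j k => l * q i j k + (1 - l) * p i j k)}

/-- The robustness with respect to a fixed reference behavior. -/
noncomputable def refRobustness {I J K : Type} [Fintype I] [Fintype J] [Fintype K]
    (S : Scenario I J K) (pref p : I → J → K → ℝ) : ℝ :=
  sInf {l : ℝ | 0 ≤ l ∧ l ≤ 1 ∧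
      Noncontextual S (fun i j k => l * pref i j k + (1 - l) * p i j k)}

/-- One term of the Kullback-Leibler divergence, with the conventions
`0 log (0/q) = 0` and `p log (p/0) = ∞` for `p > 0`. -/
noncomputable def klTerm (p q : ℝ) : EReal :=
  if p = 0 then 0 else if q = 0 then ⊤ else ((p * Real.log (p / q) : ℝ) : EReal)

/-- KL divergence between behaviors: maximum over preparations and measurements. -/
noncomputable def DKL {I J K : Type} [Fintype I] [Fintype J] [Fintype K]
    (p q : I → J → K → ℝ) : EReal :=
  ⨆ i : I, ⨆ j : J, ∑ k : K, klTerm (p i j k) (q i j k)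

/-- The relative entropy of contextuality. -/
noncomputable def relEntCtx {I J K : Type} [Fintype I] [Fintype J] [Fintype K]
    (S : Scenario I J K) (p : I → J → K → ℝ) : EReal :=
  ⨅ q ∈ {q : I → J → K → ℝ | Noncontextual S q}, DKL p q

/-- ℓ1 distance between behaviors: maximum over preparations and measurements. -/
noncomputable def D1 {I J K : Type} [Fintype I] [Fintype J] [Fintype K]
    (p q : I → J → K → ℝ) : ℝ :=
  ⨆ ij : I × J, ∑ k : K, |p ij.1 ij.2 k - q ij.1 ij.2 k|

/-- The ℓ1-contextuality distance. -/
noncomputable def l1CtxDistance {I J K : Type} [Fintype I] [Fintype J] [Fintype K]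
    (S : Scenario I J K) (p : I → J → K → ℝ) : ℝ :=
  sInf {d : ℝ | ∃ q : I → J → K → ℝ, Noncontextual S q ∧ D1 p q = d}

/-- The uniform ℓ1-contextuality distance. -/
noncomputable def uniformL1CtxDistance {I J K : Type} [Fintype I] [Fintype J] [Fintype K]
    (S : Scenario I J K) (p : I → J → K → ℝ) : ℝ :=
  (1 / (2 * (Fintype.card I : ℝ) * (Fintype.card J : ℝ))) *
    sInf {d : ℝ | ∃ q : I → J → K → ℝ, Noncontextual S q ∧
      ∑ i, ∑ j, ∑ k, |p i j k - q i j k| = d}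

/-- The measurement-assignment polytope of a scenario. -/
def MAPolytope {I J K : Type} [Fintype I] [Fintype J] [Fintype K]
    (S : Scenario I J K) : Set (K × J → ℝ) :=
  {ξ | (∀ kj, 0 ≤ ξ kj) ∧ (∀ j, ∑ k, ξ (k, j) = 1) ∧
    ∀ r, ∑ kj : K × J, ((S.measEq r).1 kj - (S.measEq r).2 kj) * ξ kj = 0}

lemma sum_prod_split {A B : Type} [Fintype A] [Fintype B] (f : A → ℝ) (g : B → ℝ) :
    ∑ x : A × B, f x.1 * g x.2 = (∑ a, f a) * (∑ b, g b) := by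
  rw [Fintype.sum_prod_type, Finset.sum_mul_sum]

lemma noncontextual_isBehavior {I J K : Type} [Fintype I] [Fintype J] [Fintype K]
    {S : Scenario I J K} {q : I → J → K → ℝ} (h : Noncontextual S q) : IsBehavior q := by
  obtain ⟨n, μ, ξ, hμ, hξ, hq, -, -⟩ := h
  constructor
  · intro i j k
    rw [hq]
    exact Finset.sum_nonneg fun l _ => mul_nonneg ((hξ l j).1 k) ((hμ i).1 l)
  · intro i j
    simp only [hq]
    rw [Finset.sum_comm]
    calc ∑ l, ∑ k, ξ l j k * μ i l = ∑ l, (∑ k, ξ l j k) * μ i l := by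
          simp [Finset.sum_mul]
      _ = ∑ l, μ i l := by
          refine Finset.sum_congr rfl fun l _ => by rw [(hξ l j).2, one_mul]
      _ = 1 := (hμ i).2

lemma noncontextual_prod {I1 J1 K1 I2 J2 K2 : Type}
    [Fintype I1] [Fintype J1] [Fintype K1] [Fintype I2] [Fintype J2] [Fintype K2]
    {S1 : Scenario I1 J1 K1} {S2 : Scenario I2 J2 K2}
    {q1 : I1 → J1 → K1 → ℝ} {q2 : I2 → J2 → K2 → ℝ}
    (h1 : Noncontextual S1 q1) (h2 : Noncontextual S2 q2) :
    Noncontextual (S1.prod S2) (prodBehavior q1 q2) := by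
  obtain ⟨n1, μ1, ξ1, hμ1, hξ1, hq1, hp1, hm1⟩ := h1
  obtain ⟨n2, μ2, ξ2, hμ2, hξ2, hq2, hp2, hm2⟩ := h2
  refine ⟨n1 * n2,
    fun i l => μ1 i.1 (finProdFinEquiv.symm l).1 * μ2 i.2 (finProdFinEquiv.symm l).2,
    fun l j k => ξ1 (finProdFinEquiv.symm l).1 j.1 k.1 * ξ2 (finProdFinEquiv.symm l).2 j.2 k.2,
    ?_, ?_, ?_, ?_, ?_⟩
  · intro i
    have h := isDist_prodFun (hμ1 i.1) (hμ2 i.2)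
    refine ⟨fun l => h.1 _, ?_⟩
    rw [← h.2]
    exact Fintype.sum_equiv finProdFinEquiv.symm _ _ (fun l => rfl)
  · intro l j
    exact isDist_prodFun (hξ1 _ j.1) (hξ2 _ j.2)
  · intro i j k
    have : prodBehavior q1 q2 i j k
        = (∑ l1, ξ1 l1 j.1 k.1 * μ1 i.1 l1) * (∑ l2, ξ2 l2 j.2 k.2 * μ2 i.2 l2) := by
      rw [prodBehavior, hq1, hq2]
    rw [this, ← sum_prod_split]
    rw [← Fintype.sum_equiv finProdFinEquiv.symm
      (fun l => (ξ1 (finProdFinEquiv.symm l).1 j.1 k.1 * μ1 i.1 (finProdFinEquiv.symm l).1)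
        * (ξ2 (finProdFinEquiv.symm l).2 j.2 k.2 * μ2 i.2 (finProdFinEquiv.symm l).2))
      _ (fun l => rfl)]
    exact Finset.sum_congr rfl fun l _ => by ring
  · rintro (⟨s, γ⟩ | ⟨s, γ⟩) l
    · have : ∀ i : I1 × I2,
          ((S1.prod S2).prepEq (Sum.inl (s, γ))).1 i - ((S1.prod S2).prepEq (Sum.inl (s, γ))).2 i
            = ((S1.prepEq s).1 i.1 - (S1.prepEq s).2 i.1) * γ.1 i.2 := fun i => by
        simp [Scenario.prod, sub_mul]
      calc ∑ i : I1 × I2, _ * (μ1 i.1 (finProdFinEquiv.symm l).1 * μ2 i.2 (finProdFinEquiv.symm l).2)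
          = ∑ i : I1 × I2,
            (((S1.prepEq s).1 i.1 - (S1.prepEq s).2 i.1) * μ1 i.1 (finProdFinEquiv.symm l).1)
              * (γ.1 i.2 * μ2 i.2 (finProdFinEquiv.symm l).2) := by
            refine Finset.sum_congr rfl fun i _ => ?_
            rw [this i]; ring
        _ = 0 := by
            rw [sum_prod_split
              (fun i1 => ((S1.prepEq s).1 i1 - (S1.prepEq s).2 i1) * μ1 i1 (finProdFinEquiv.symm l).1)
              (fun i2 => γ.1 i2 * μ2 i2 (finProdFinEquiv.symm l).2),
              hp1 s (finProdFinEquiv.symm l).1, zero_mul]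
    · have : ∀ i : I1 × I2,
          ((S1.prod S2).prepEq (Sum.inr (s, γ))).1 i - ((S1.prod S2).prepEq (Sum.inr (s, γ))).2 i
            = γ.1 i.1 * ((S2.prepEq s).1 i.2 - (S2.prepEq s).2 i.2) := fun i => by
        simp [Scenario.prod, mul_sub]
      calc ∑ i : I1 × I2, _ * (μ1 i.1 (finProdFinEquiv.symm l).1 * μ2 i.2 (finProdFinEquiv.symm l).2)
          = ∑ i : I1 × I2,
            (γ.1 i.1 * μ1 i.1 (finProdFinEquiv.symm l).1)
              * (((S2.prepEq s).1 i.2 - (S2.prepEq s).2 i.2) * μ2 i.2 (finProdFinEquiv.symm l).2) := by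
            refine Finset.sum_congr rfl fun i _ => ?_
            rw [this i]; ring
        _ = 0 := by
            rw [sum_prod_split
              (fun i1 => γ.1 i1 * μ1 i1 (finProdFinEquiv.symm l).1)
              (fun i2 => ((S2.prepEq s).1 i2 - (S2.prepEq s).2 i2) * μ2 i2 (finProdFinEquiv.symm l).2),
              hp2 s (finProdFinEquiv.symm l).2, mul_zero]
  · rintro (⟨r, γ⟩ | ⟨r, γ⟩) l
    · calc ∑ kj : (K1 × K2) × (J1 × J2), _
          = ∑ kj : (K1 × K2) × (J1 × J2),
            (fun x : (K1 × J1) × (K2 × J2) =>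
              (((S1.measEq r).1 x.1 - (S1.measEq r).2 x.1) * ξ1 (finProdFinEquiv.symm l).1 x.1.2 x.1.1)
                * (γ.1 x.2 * ξ2 (finProdFinEquiv.symm l).2 x.2.2 x.2.1))
              ((kj.1.1, kj.2.1), (kj.1.2, kj.2.2)) := by
            refine Finset.sum_congr rfl fun kj _ => ?_
            simp only [Scenario.prod]
            ring
        _ = ∑ x : (K1 × J1) × (K2 × J2),
              (((S1.measEq r).1 x.1 - (S1.measEq r).2 x.1) * ξ1 (finProdFinEquiv.symm l).1 x.1.2 x.1.1)
                * (γ.1 x.2 * ξ2 (finProdFinEquiv.symm l).2 x.2.2 x.2.1) :=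
            Fintype.sum_equiv (Equiv.prodProdProdComm K1 K2 J1 J2) _ _
              (by rintro ⟨⟨a, b⟩, c, d⟩; rfl)
        _ = 0 := by
            rw [sum_prod_split
              (fun x1 : K1 × J1 => ((S1.measEq r).1 x1 - (S1.measEq r).2 x1) * ξ1 (finProdFinEquiv.symm l).1 x1.2 x1.1)
              (fun x2 : K2 × J2 => γ.1 x2 * ξ2 (finProdFinEquiv.symm l).2 x2.2 x2.1),
              hm1 r (finProdFinEquiv.symm l).1, zero_mul]
    · calc ∑ kj : (K1 × K2) × (J1 × J2), _
          = ∑ kj : (K1 × K2) × (J1 × J2),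
            (fun x : (K1 × J1) × (K2 × J2) =>
              (γ.1 x.1 * ξ1 (finProdFinEquiv.symm l).1 x.1.2 x.1.1)
                * (((S2.measEq r).1 x.2 - (S2.measEq r).2 x.2) * ξ2 (finProdFinEquiv.symm l).2 x.2.2 x.2.1))
              ((kj.1.1, kj.2.1), (kj.1.2, kj.2.2)) := by
            refine Finset.sum_congr rfl fun kj _ => ?_
            simp only [Scenario.prod]
            ring
        _ = ∑ x : (K1 × J1) × (K2 × J2),
              (γ.1 x.1 * ξ1 (finProdFinEquiv.symm l).1 x.1.2 x.1.1)
                * (((S2.measEq r).1 x.2 - (S2.measEq r).2 x.2) * ξ2 (finProdFinEquiv.symm l).2 x.2.2 x.2.1) :=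
            Fintype.sum_equiv (Equiv.prodProdProdComm K1 K2 J1 J2) _ _
              (by rintro ⟨⟨a, b⟩, c, d⟩; rfl)
        _ = 0 := by
            rw [sum_prod_split
              (fun x1 : K1 × J1 => γ.1 x1 * ξ1 (finProdFinEquiv.symm l).1 x1.2 x1.1)
              (fun x2 : K2 × J2 => ((S2.measEq r).1 x2 - (S2.measEq r).2 x2) * ξ2 (finProdFinEquiv.symm l).2 x2.2 x2.1),
              hm2 r (finProdFinEquiv.symm l).2, mul_zero]

lemma triple_sum_split {I1 J1 K1 I2 J2 K2 : Type}
    [Fintype I1] [Fintype J1] [Fintype K1] [Fintype I2] [Fintype J2] [Fintype K2]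
    (F : I1 → J1 → K1 → ℝ) (G : I2 → J2 → K2 → ℝ) :
    ∑ i : I1 × I2, ∑ j : J1 × J2, ∑ k : K1 × K2, F i.1 j.1 k.1 * G i.2 j.2 k.2
      = (∑ i1, ∑ j1, ∑ k1, F i1 j1 k1) * (∑ i2, ∑ j2, ∑ k2, G i2 j2 k2) := by
  rw [← sum_prod_split]
  refine Finset.sum_congr rfl fun i _ => ?_
  rw [← sum_prod_split]
  refine Finset.sum_congr rfl fun j _ => ?_
  rw [← sum_prod_split]
lemma l1_prod_bound {I1 J1 K1 I2 J2 K2 : Type}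
    [Fintype I1] [Fintype J1] [Fintype K1] [Fintype I2] [Fintype J2] [Fintype K2]
    {p1 q1 : I1 → J1 → K1 → ℝ} {p2 q2 : I2 → J2 → K2 → ℝ}
    (hp2 : IsBehavior p2) (hq1 : IsBehavior q1) :
    ∑ i : I1 × I2, ∑ j : J1 × J2, ∑ k : K1 × K2,
        |prodBehavior p1 p2 i j k - prodBehavior q1 q2 i j k|
      ≤ ((Fintype.card I2 : ℝ) * (Fintype.card J2 : ℝ))
          * (∑ i1, ∑ j1, ∑ k1, |p1 i1 j1 k1 - q1 i1 j1 k1|)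
        + ((Fintype.card I1 : ℝ) * (Fintype.card J1 : ℝ))
          * (∑ i2, ∑ j2, ∑ k2, |p2 i2 j2 k2 - q2 i2 j2 k2|) := by
  have key : ∀ (i : I1 × I2) (j : J1 × J2) (k : K1 × K2),
      |prodBehavior p1 p2 i j k - prodBehavior q1 q2 i j k|
        ≤ |p1 i.1 j.1 k.1 - q1 i.1 j.1 k.1| * p2 i.2 j.2 k.2
          + q1 i.1 j.1 k.1 * |p2 i.2 j.2 k.2 - q2 i.2 j.2 k.2| := by
    intro i j k
    have hb : 0 ≤ p2 i.2 j.2 k.2 := hp2.1 _ _ _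
    have hc : 0 ≤ q1 i.1 j.1 k.1 := hq1.1 _ _ _
    calc |prodBehavior p1 p2 i j k - prodBehavior q1 q2 i j k|
        = |(p1 i.1 j.1 k.1 - q1 i.1 j.1 k.1) * p2 i.2 j.2 k.2
            + q1 i.1 j.1 k.1 * (p2 i.2 j.2 k.2 - q2 i.2 j.2 k.2)| := by
          unfold prodBehavior; ring_nf
      _ ≤ |(p1 i.1 j.1 k.1 - q1 i.1 j.1 k.1) * p2 i.2 j.2 k.2|
            + |q1 i.1 j.1 k.1 * (p2 i.2 j.2 k.2 - q2 i.2 j.2 k.2)| := abs_add_le _ _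
      _ = |p1 i.1 j.1 k.1 - q1 i.1 j.1 k.1| * p2 i.2 j.2 k.2
            + q1 i.1 j.1 k.1 * |p2 i.2 j.2 k.2 - q2 i.2 j.2 k.2| := by
          rw [abs_mul, abs_mul, abs_of_nonneg hb, abs_of_nonneg hc]
  calc ∑ i : I1 × I2, ∑ j : J1 × J2, ∑ k : K1 × K2,
        |prodBehavior p1 p2 i j k - prodBehavior q1 q2 i j k|
      ≤ ∑ i : I1 × I2, ∑ j : J1 × J2, ∑ k : K1 × K2,
          (|p1 i.1 j.1 k.1 - q1 i.1 j.1 k.1| * p2 i.2 j.2 k.2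
            + q1 i.1 j.1 k.1 * |p2 i.2 j.2 k.2 - q2 i.2 j.2 k.2|) := by
        refine Finset.sum_le_sum fun i _ => Finset.sum_le_sum fun j _ =>
          Finset.sum_le_sum fun k _ => key i j k
    _ = (∑ i : I1 × I2, ∑ j : J1 × J2, ∑ k : K1 × K2,
          |p1 i.1 j.1 k.1 - q1 i.1 j.1 k.1| * p2 i.2 j.2 k.2)
        + ∑ i : I1 × I2, ∑ j : J1 × J2, ∑ k : K1 × K2,
          q1 i.1 j.1 k.1 * |p2 i.2 j.2 k.2 - q2 i.2 j.2 k.2| := by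
        simp [Finset.sum_add_distrib]
    _ = (∑ i1, ∑ j1, ∑ k1, |p1 i1 j1 k1 - q1 i1 j1 k1|) * (∑ i2, ∑ j2, ∑ k2, p2 i2 j2 k2)
        + (∑ i1, ∑ j1, ∑ k1, q1 i1 j1 k1) * (∑ i2, ∑ j2, ∑ k2, |p2 i2 j2 k2 - q2 i2 j2 k2|) := by
        rw [triple_sum_split (fun i1 j1 k1 => |p1 i1 j1 k1 - q1 i1 j1 k1|) p2,
          triple_sum_split q1 (fun i2 j2 k2 => |p2 i2 j2 k2 - q2 i2 j2 k2|)]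
    _ = ((Fintype.card I2 : ℝ) * (Fintype.card J2 : ℝ))
          * (∑ i1, ∑ j1, ∑ k1, |p1 i1 j1 k1 - q1 i1 j1 k1|)
        + ((Fintype.card I1 : ℝ) * (Fintype.card J1 : ℝ))
          * (∑ i2, ∑ j2, ∑ k2, |p2 i2 j2 k2 - q2 i2 j2 k2|) := by
        have h2 : (∑ i2 : I2, ∑ j2 : J2, ∑ k2, p2 i2 j2 k2)
            = (Fintype.card I2 : ℝ) * (Fintype.card J2 : ℝ) := by
          simp [hp2.2, Finset.sum_const, Finset.card_univ]
        have h1 : (∑ i1 : I1, ∑ j1 : J1, ∑ k1, q1 i1 j1 k1)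
            = (Fintype.card I1 : ℝ) * (Fintype.card J1 : ℝ) := by
          simp [hq1.2, Finset.sum_const, Finset.card_univ]
        rw [h1, h2]; ring

lemma le_mul_csInf {c x : ℝ} {T : Set ℝ} (hT : T.Nonempty) (hc : 0 < c)
    (h : ∀ d ∈ T, x ≤ c * d) : x ≤ c * sInf T := by
  have hx : x / c ≤ sInf T := le_csInf hT fun d hd => by
    rw [div_le_iff₀ hc]; rw [mul_comm] at *; exact h d hd
  calc x = c * (x / c) := by field_simp
    _ ≤ c * sInf T := mul_le_mul_of_nonneg_left hx hc.le
/-- the uniform ℓ1-contextuality distance is subadditive under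
independent juxtapositions. -/
theorem uniformL1CtxDistance_subadditive
    {I1 J1 K1 I2 J2 K2 : Type}
    [Fintype I1] [Fintype J1] [Fintype K1] [Fintype I2] [Fintype J2] [Fintype K2]
    [Nonempty I1] [Nonempty J1] [Nonempty K1] [Nonempty I2] [Nonempty J2] [Nonempty K2]
    (S1 : Scenario I1 J1 K1) (S2 : Scenario I2 J2 K2)
    (p1 : I1 → J1 → K1 → ℝ) (p2 : I2 → J2 → K2 → ℝ)
    (hp1 : IsBehavior p1) (hp2 : IsBehavior p2)
    (h1 : {q : I1 → J1 → K1 → ℝ | Noncontextual S1 q}.Nonempty)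
    (h2 : {q : I2 → J2 → K2 → ℝ | Noncontextual S2 q}.Nonempty)
    (h12 : {q : I1 × I2 → J1 × J2 → K1 × K2 → ℝ |
        Noncontextual (S1.prod S2) q}.Nonempty) :
    uniformL1CtxDistance (S1.prod S2) (prodBehavior p1 p2)
      ≤ uniformL1CtxDistance S1 p1 + uniformL1CtxDistance S2 p2 := by
  classical
  set N1 : ℝ := (Fintype.card I1 : ℝ) with hN1def
  set M1 : ℝ := (Fintype.card J1 : ℝ) with hM1def
  set N2 : ℝ := (Fintype.card I2 : ℝ) with hN2def
  set M2 : ℝ := (Fintype.card J2 : ℝ) with hM2def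
  have hN1 : 0 < N1 := by rw [hN1def]; exact_mod_cast Fintype.card_pos (α := I1)
  have hM1 : 0 < M1 := by rw [hM1def]; exact_mod_cast Fintype.card_pos (α := J1)
  have hN2 : 0 < N2 := by rw [hN2def]; exact_mod_cast Fintype.card_pos (α := I2)
  have hM2 : 0 < M2 := by rw [hM2def]; exact_mod_cast Fintype.card_pos (α := J2)
  set c1 : ℝ := 1 / (2 * N1 * M1) with hc1def
  set c2 : ℝ := 1 / (2 * N2 * M2) with hc2def
  have hc1 : 0 < c1 := by rw [hc1def]; positivity
  have hc2 : 0 < c2 := by rw [hc2def]; positivity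
  set T1 : Set ℝ := {d : ℝ | ∃ q : I1 → J1 → K1 → ℝ, Noncontextual S1 q ∧
      ∑ i, ∑ j, ∑ k, |p1 i j k - q i j k| = d} with hT1def
  set T2 : Set ℝ := {d : ℝ | ∃ q : I2 → J2 → K2 → ℝ, Noncontextual S2 q ∧
      ∑ i, ∑ j, ∑ k, |p2 i j k - q i j k| = d} with hT2def
  set T12 : Set ℝ := {d : ℝ | ∃ q : I1 × I2 → J1 × J2 → K1 × K2 → ℝ,
      Noncontextual (S1.prod S2) q ∧
      ∑ i, ∑ j, ∑ k, |prodBehavior p1 p2 i j k - q i j k| = d} with hT12def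
  have hT1ne : T1.Nonempty := by
    obtain ⟨q, hq⟩ := h1; exact ⟨_, q, hq, rfl⟩
  have hT2ne : T2.Nonempty := by
    obtain ⟨q, hq⟩ := h2; exact ⟨_, q, hq, rfl⟩
  have hbdd12 : BddBelow T12 := by
    refine ⟨0, fun d hd => ?_⟩
    obtain ⟨q, -, hq⟩ := hd
    rw [← hq]
    exact Finset.sum_nonneg fun i _ => Finset.sum_nonneg fun j _ =>
      Finset.sum_nonneg fun k _ => abs_nonneg _
  have hU1 : uniformL1CtxDistance S1 p1 = c1 * sInf T1 := rfl
  have hU2 : uniformL1CtxDistance S2 p2 = c2 * sInf T2 := rfl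
  have hU12 : uniformL1CtxDistance (S1.prod S2) (prodBehavior p1 p2)
      = (1 / (2 * ((Fintype.card (I1 × I2) : ℝ)) * ((Fintype.card (J1 × J2) : ℝ))))
        * sInf T12 := rfl
  have hcard : (1 / (2 * ((Fintype.card (I1 × I2) : ℝ)) * ((Fintype.card (J1 × J2) : ℝ))))
      = 1 / (2 * (N1 * N2) * (M1 * M2)) := by
    rw [Fintype.card_prod, Fintype.card_prod]
    push_cast
    ring_nf
    rfl
  set x : ℝ := uniformL1CtxDistance (S1.prod S2) (prodBehavior p1 p2) with hxdef
  have key : ∀ d1 ∈ T1, ∀ d2 ∈ T2, x ≤ c1 * d1 + c2 * d2 := by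
    rintro d1 ⟨q1, hq1, hd1⟩ d2 ⟨q2, hq2, hd2⟩
    have hmem : (∑ i, ∑ j, ∑ k,
        |prodBehavior p1 p2 i j k - prodBehavior q1 q2 i j k|) ∈ T12 :=
      ⟨prodBehavior q1 q2, noncontextual_prod hq1 hq2, rfl⟩
    have hle1 : sInf T12 ≤ ∑ i, ∑ j, ∑ k,
        |prodBehavior p1 p2 i j k - prodBehavior q1 q2 i j k| := csInf_le hbdd12 hmem
    have hbnd := l1_prod_bound hp2 (noncontextual_isBehavior hq1)
      (p1 := p1) (q1 := q1) (q2 := q2)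
    rw [hd1, hd2] at hbnd
    have hcpos : (0:ℝ) < 1 / (2 * (N1 * N2) * (M1 * M2)) := by positivity
    have : x ≤ (1 / (2 * (N1 * N2) * (M1 * M2))) * (N2 * M2 * d1 + N1 * M1 * d2) := by
      rw [hU12, hcard]
      refine mul_le_mul_of_nonneg_left (le_trans hle1 hbnd) hcpos.le
    refine le_trans this (le_of_eq ?_)
    rw [hc1def, hc2def]
    field_simp
  have step1 : ∀ d2 ∈ T2, x - c2 * d2 ≤ c1 * sInf T1 := by
    intro d2 hd2
    exact le_mul_csInf hT1ne hc1 fun d1 hd1 => by linarith [key d1 hd1 d2 hd2]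
  have step2 : x - c1 * sInf T1 ≤ c2 * sInf T2 :=
    le_mul_csInf hT2ne hc2 fun d2 hd2 => by linarith [step1 d2 hd2]
  rw [hU1, hU2]
  linarith
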